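/- For α > 1, a complex number z with Re(z) < 0, and t > 0, define q₂(t) = (1/√(πt))·∫_{α-1}^∞ e^{-ξ²/(4t) + z(ξ-(α-1))} dξ. Then for all λ > 0, ∫₀^∞ e^{-λt}·q₂(t) dt = e^{-(α-1)√λ}/(√λ·(√λ - z)). -/

import Mathlib

open MeasureTheory Set Real Filter

section Aux

lemma my_phi_deriv {c : ℝ} (s : ℝ) (hs : s ∈ Ioi (0:ℝ)) :
    HasDerivAt (fun s => s - c/s) (1 + c/s^2) s := by
  have hs' : (s:ℝ) ≠ 0 := ne_of_gt hs
  have h := (hasDerivAt_id s).sub ((hasDerivAt_inv hs').const_mul c)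
  simp only [div_eq_mul_inv]
  exact h.congr_deriv (by ring)

lemma my_psi_deriv {c : ℝ} (s : ℝ) (hs : s ∈ Ioi (0:ℝ)) :
    HasDerivAt (fun s : ℝ => c/s) (-(c/s^2)) s := by
  have hs' : (s:ℝ) ≠ 0 := ne_of_gt hs
  have h := (hasDerivAt_inv hs').const_mul c
  simp only [div_eq_mul_inv]
  exact h.congr_deriv (by ring)

lemma my_psi_image {c : ℝ} (hc : 0 < c) : (fun s : ℝ => c/s) '' Ioi (0:ℝ) = Ioi (0:ℝ) := by
  ext u
  simp only [mem_image, mem_Ioi]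
  constructor
  · rintro ⟨s, hs, rfl⟩; positivity
  · intro hu; exact ⟨c/u, by positivity, by field_simp⟩

lemma my_psi_inj {c : ℝ} (hc : 0 < c) : InjOn (fun s : ℝ => c/s) (Ioi (0:ℝ)) := by
  intro a ha b hb hab
  simp only [mem_Ioi] at ha hb
  field_simp at hab
  linarith

lemma my_phi_image {c : ℝ} (hc : 0 < c) : (fun s => s - c/s) '' Ioi (0:ℝ) = univ := by
  apply eq_univ_of_forall
  intro u
  set r := Real.sqrt (u^2 + 4*c) with hr
  have hr2 : r^2 = u^2 + 4*c := Real.sq_sqrt (by positivity)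
  have hru : |u| < r := by
    nlinarith [abs_nonneg u, sq_abs u, Real.sqrt_nonneg (u^2+4*c)]
  have hs : 0 < (u + r)/2 := by
    cases' abs_lt.mp hru with h1 h2; linarith
  have hne : u + r ≠ 0 := by linarith
  refine ⟨(u+r)/2, hs, ?_⟩
  field_simp
  nlinarith [hs]

lemma my_phi_inj {c : ℝ} (hc : 0 < c) : InjOn (fun s => s - c/s) (Ioi (0:ℝ)) := by
  have : StrictMonoOn (fun s => s - c/s) (Ioi (0:ℝ)) := by
    intro a ha b hb hab
    simp only
    have ha' : (0:ℝ) < a := ha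
    have : c/b < c/a := div_lt_div_of_pos_left hc ha hab
    linarith
  exact this.injOn

lemma my_f_integrable {c : ℝ} (hc : 0 ≤ c) :
    IntegrableOn (fun s => Real.exp (-(s^2 + c^2/s^2))) (Ioi (0:ℝ)) := by
  apply Integrable.mono' ((integrable_exp_neg_mul_sq one_pos).restrict (s := Ioi 0))
  · apply Measurable.aestronglyMeasurable; measurability
  · filter_upwards with s
    rw [Real.norm_eq_abs, Real.abs_exp, Real.exp_le_exp]
    have : 0 ≤ c^2/s^2 := by positivity
    nlinarith

/-- Glasser's integral: `∫₀^∞ exp(-(s² + c²/s²)) ds = (√π/2) e^{-2c}` for `c ≥ 0`. -/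
lemma my_glasser {c : ℝ} (hc : 0 ≤ c) :
    ∫ s in Ioi (0:ℝ), Real.exp (-(s^2 + c^2/s^2)) = Real.sqrt π / 2 * Real.exp (-(2*c)) := by
  rcases eq_or_lt_of_le hc with h0 | hc
  · subst h0
    simp only [ne_eq, OfNat.ofNat_ne_zero, not_false_eq_true, zero_pow, zero_div, add_zero,
      mul_zero, neg_zero, Real.exp_zero, mul_one]
    have := integral_gaussian_Ioi 1
    simpa [Real.sqrt_div_self', neg_mul, one_mul] using this
  set f : ℝ → ℝ := fun s => Real.exp (-(s^2 + c^2/s^2)) with hf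
  have hmeas : MeasurableSet (Ioi (0:ℝ)) := measurableSet_Ioi
  have key : ∫ u : ℝ, Real.exp (-u^2) =
      ∫ s in Ioi (0:ℝ), |1 + c/s^2| • Real.exp (-((s - c/s)^2)) := by
    rw [← setIntegral_univ, ← my_phi_image hc]
    exact integral_image_eq_integral_abs_deriv_smul hmeas
      (fun s hs => (my_phi_deriv s hs).hasDerivWithinAt) (my_phi_inj hc)
      (fun u => Real.exp (-u^2))
  have gauss : ∫ u : ℝ, Real.exp (-u^2) = Real.sqrt π := by
    simpa [one_mul] using integral_gaussian 1
  have hcongr : ∀ s ∈ Ioi (0:ℝ), |1 + c/s^2| • Real.exp (-((s - c/s)^2)) =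
      Real.exp (2*c) * (f s + (c/s^2) * f s) := by
    intro s hs
    have hs' : (s:ℝ) ≠ 0 := ne_of_gt hs
    have h1 : (0:ℝ) < 1 + c/s^2 := by positivity
    rw [abs_of_pos h1, smul_eq_mul]
    have h2 : (s - c/s)^2 = s^2 + c^2/s^2 - 2*c := by field_simp; ring
    rw [h2, hf]
    simp only
    rw [show -(s^2 + c^2/s^2 - 2*c) = -(s^2 + c^2/s^2) + 2*c by ring, Real.exp_add]
    ring
  have hBA : ∫ s in Ioi (0:ℝ), (c/s^2) * f s = ∫ s in Ioi (0:ℝ), f s := by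
    have := integral_image_eq_integral_abs_deriv_smul hmeas
      (fun s hs => (my_psi_deriv (c := c) s hs).hasDerivWithinAt) (my_psi_inj hc) f
    rw [my_psi_image hc] at this
    rw [this]
    apply setIntegral_congr_fun hmeas
    intro s hs
    have hs' : (s:ℝ) ≠ 0 := ne_of_gt hs
    have hpos : (0:ℝ) < c/s^2 := by positivity
    simp only [abs_neg, smul_eq_mul, hf, abs_of_pos hpos]
    congr 2
    field_simp
    ring
  have hB_int : IntegrableOn (fun s => (c/s^2) * f s) (Ioi (0:ℝ)) := by
    have h1 : IntegrableOn (fun s => |(-(c/s^2))| • f (c/s)) (Ioi (0:ℝ)) := by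
      rw [← integrableOn_image_iff_integrableOn_abs_deriv_smul hmeas
        (fun s hs => (my_psi_deriv (c := c) s hs).hasDerivWithinAt) (my_psi_inj hc) f,
        my_psi_image hc]
      exact my_f_integrable hc.le
    apply h1.congr_fun _ hmeas
    intro s hs
    have hs' : (s:ℝ) ≠ 0 := ne_of_gt hs
    have hpos : (0:ℝ) < c/s^2 := by positivity
    simp only [abs_neg, smul_eq_mul, hf, abs_of_pos hpos]
    congr 2
    field_simp
    ring
  have hA_int := my_f_integrable (c := c) hc.le
  have h2 : Real.sqrt π = Real.exp (2*c) *
      ((∫ s in Ioi (0:ℝ), f s) + ∫ s in Ioi (0:ℝ), (c/s^2) * f s) := by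
    calc Real.sqrt π = ∫ s in Ioi (0:ℝ), |1 + c/s^2| • Real.exp (-((s - c/s)^2)) := by
          rw [← gauss, key]
      _ = ∫ s in Ioi (0:ℝ), Real.exp (2*c) * (f s + (c/s^2) * f s) :=
          setIntegral_congr_fun hmeas hcongr
      _ = Real.exp (2*c) * ∫ s in Ioi (0:ℝ), (f s + (c/s^2) * f s) := integral_const_mul _ _
      _ = Real.exp (2*c) * ((∫ s in Ioi (0:ℝ), f s) + ∫ s in Ioi (0:ℝ), (c/s^2) * f s) := by
          rw [integral_add hA_int hB_int]
  rw [hBA] at h2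
  have hexp : Real.exp (-(2*c)) = (Real.exp (2*c))⁻¹ := Real.exp_neg _
  have hepos : (0:ℝ) < Real.exp (2*c) := Real.exp_pos _
  rw [hexp]
  field_simp
  linarith

/-- Laplace transform of the heat kernel. -/
lemma my_heat_LT {l : ℝ} (hl : 0 < l) {ξ : ℝ} (hξ : 0 ≤ ξ) :
    ∫ t in Ioi (0:ℝ), Real.exp (-(l*t)) * (1/Real.sqrt (π*t)) * Real.exp (-(ξ^2/(4*t)))
      = Real.exp (-(ξ * Real.sqrt l)) / Real.sqrt l := by
  have hl' : l ≠ 0 := hl.ne'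
  set c := ξ * Real.sqrt l / 2 with hcdef
  have hc : 0 ≤ c := by positivity
  have hc2 : c^2 = ξ^2*l/4 := by
    rw [hcdef, div_pow, mul_pow, Real.sq_sqrt hl.le]; norm_num
  set g : ℝ → ℝ := fun t => Real.exp (-(l*t)) * (1/Real.sqrt (π*t)) * Real.exp (-(ξ^2/(4*t)))
    with hg
  have himg : (fun s : ℝ => s^2/l) '' Ioi 0 = Ioi 0 := by
    ext u
    simp only [mem_image, mem_Ioi]
    constructor
    · rintro ⟨s, hs, rfl⟩; positivity
    · intro hu
      refine ⟨Real.sqrt (l*u), by positivity, ?_⟩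
      rw [Real.sq_sqrt (by positivity)]
      field_simp
  have hderiv : ∀ s ∈ Ioi (0:ℝ), HasDerivWithinAt (fun s : ℝ => s^2/l) (2*s/l) (Ioi 0) s := by
    intro s hs
    have h : HasDerivWithinAt (fun s : ℝ => s^2/l) ((2:ℕ) * s^(2-1) / l) (Ioi 0) s :=
      ((hasDerivAt_pow 2 s).div_const l).hasDerivWithinAt
    convert h using 1
    norm_num
  have hinj : InjOn (fun s : ℝ => s^2/l) (Ioi 0) := by
    have : StrictMonoOn (fun s : ℝ => s^2/l) (Ioi 0) := by
      intro a ha b hb hab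
      have ha' : (0:ℝ) < a := ha
      have : a^2 < b^2 := by nlinarith
      exact div_lt_div_of_pos_right this hl
    exact this.injOn
  have hsπl : Real.sqrt (π*l) ≠ 0 := by positivity
  calc ∫ t in Ioi (0:ℝ), g t
      = ∫ s in Ioi (0:ℝ), |2*s/l| • g (s^2/l) := by
        have h := integral_image_eq_integral_abs_deriv_smul measurableSet_Ioi hderiv hinj g
        rw [himg] at h
        exact h
    _ = ∫ s in Ioi (0:ℝ), (2/Real.sqrt (π*l)) * Real.exp (-(s^2 + c^2/s^2)) := by
        apply setIntegral_congr_fun measurableSet_Ioi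
        intro s hs
        have hs' : (0:ℝ) < s := hs
        have habs : |2*s/l| = 2*s/l := abs_of_pos (by positivity)
        have h1 : l*(s^2/l) = s^2 := by field_simp
        have h2 : Real.sqrt (π*(s^2/l)) = Real.sqrt (π*l) * s / l := by
          rw [show π*(s^2/l) = (π*l) * (s/l)^2 by field_simp,
            Real.sqrt_mul (by positivity), Real.sqrt_sq (by positivity)]
          ring
        have h3 : ξ^2/(4*(s^2/l)) = c^2/s^2 := by
          rw [hc2]; field_simp
        simp only [smul_eq_mul, hg]
        rw [habs, h1, h2, h3, show -(s^2 + c^2/s^2) = -(s^2) + -(c^2/s^2) by ring, Real.exp_add]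
        field_simp
    _ = (2/Real.sqrt (π*l)) * (Real.sqrt π / 2 * Real.exp (-(2*c))) := by
        rw [integral_const_mul, my_glasser hc]
    _ = Real.exp (-(ξ * Real.sqrt l)) / Real.sqrt l := by
        rw [show (2:ℝ)*c = ξ * Real.sqrt l by rw [hcdef]; ring,
          Real.sqrt_mul pi_pos.le]
        have hsπ : Real.sqrt π ≠ 0 := by positivity
        have hsl : Real.sqrt l ≠ 0 := by positivity
        field_simp

lemma my_cexp_Ioi_integrable {w : ℂ} (hw : w.re < 0) (a : ℝ) :
    IntegrableOn (fun x : ℝ => Complex.exp (w * x)) (Ioi a) := by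
  apply Integrable.mono' ((exp_neg_integrableOn_Ioi a (neg_pos.mpr hw)))
  · exact (Complex.continuous_exp.comp (continuous_const.mul Complex.continuous_ofReal)
      ).aestronglyMeasurable.restrict
  · filter_upwards with x
    rw [Complex.norm_exp]
    simp [Complex.mul_re]

lemma my_cexp_Ioi_integral {w : ℂ} (hw : w.re < 0) (a : ℝ) :
    ∫ x in Ioi a, Complex.exp (w * x) = -Complex.exp (w * a) / w := by
  have hw0 : w ≠ 0 := fun h => by simp [h] at hw
  refine tendsto_nhds_unique
    (intervalIntegral_tendsto_integral_Ioi a (my_cexp_Ioi_integrable hw a) tendsto_id) ?_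
  have heq : ∀ b : ℝ, ∫ x in a..b, Complex.exp (w * x)
      = (Complex.exp (w * b) - Complex.exp (w * a)) / w :=
    fun b => integral_exp_mul_complex hw0
  simp only [heq]
  have h0 : Tendsto (fun b : ℝ => Complex.exp (w * b)) atTop (nhds 0) := by
    rw [tendsto_zero_iff_norm_tendsto_zero]
    have hn : ∀ b : ℝ, ‖Complex.exp (w * b)‖ = Real.exp (-((-w.re) * b)) := by
      intro b
      rw [Complex.norm_exp]
      congr 1
      simp [Complex.mul_re]
    simp only [hn]
    exact Real.tendsto_exp_atBot.comp
      (tendsto_neg_atBot_iff.mpr (Tendsto.const_mul_atTop (neg_pos.mpr hw) tendsto_id))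
  have h1 := (h0.sub (tendsto_const_nhds (x := Complex.exp (w * a)))).div_const w
  rw [zero_sub] at h1
  exact h1

lemma my_rexp_Ioi_integral {b : ℝ} (hb : b < 0) (a : ℝ) :
    ∫ x in Ioi a, Real.exp (b * x) = -Real.exp (b * a) / b := by
  have h := my_cexp_Ioi_integral (w := (b:ℂ)) (by simpa using hb) a
  have h2 : ∀ x : ℝ, Complex.exp ((b:ℂ) * x) = ((Real.exp (b * x) : ℝ) : ℂ) := by
    intro x; rw [Complex.ofReal_exp]; push_cast; ring_nf
  simp only [h2] at h
  have h3 : ((∫ x in Ioi a, Real.exp (b*x) : ℝ) : ℂ) = -(Real.exp (b*a) : ℂ)/(b:ℂ) := by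
    rw [← h]
    exact integral_ofReal.symm
  exact_mod_cast h3

lemma my_rexp_Ioi_integrable {b : ℝ} (hb : b < 0) (a : ℝ) :
    IntegrableOn (fun x : ℝ => Real.exp (b * x)) (Ioi a) := by
  have := exp_neg_integrableOn_Ioi a (neg_pos.mpr hb)
  simpa using this

lemma my_aux_int {l : ℝ} (hl : 0 < l) :
    IntegrableOn (fun t : ℝ => Real.exp (-(l*t)) * (1/Real.sqrt (π*t))) (Ioi 0) := by
  have h := Real.GammaIntegral_convergent (s := 1/2) (by norm_num)
  rw [show (0:ℝ) = l * 0 by ring, ← integrableOn_Ioi_comp_mul_left_iff _ _ hl] at h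
  have h2 := h.const_mul (Real.sqrt (l/π))
  apply (integrableOn_congr_fun _ measurableSet_Ioi).mp h2
  intro t ht
  have ht' : (0:ℝ) < t := ht
  have h3 : Real.sqrt (π*t) ≠ 0 := by positivity
  have h4 : (l*t) ^ ((1:ℝ)/2 - 1) = (Real.sqrt (l*t))⁻¹ := by
    rw [show (1:ℝ)/2 - 1 = -(1/2) by norm_num, Real.rpow_neg (by positivity),
      ← Real.sqrt_eq_rpow]
  simp only
  rw [h4, Real.sqrt_mul hl.le, Real.sqrt_mul pi_pos.le, Real.sqrt_div hl.le]
  have h5 : Real.sqrt π ≠ 0 := by positivity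
  have h6 : Real.sqrt l ≠ 0 := by positivity
  have h7 : Real.sqrt t ≠ 0 := by positivity
  field_simp

end Aux

/-- For `α > 1` and `z ∈ ℂ` with `Re z < 0`, with
`q₂(t) = (1/√(πt)) ∫_{α-1}^∞ e^{-ξ²/(4t) + z(ξ-(α-1))} dξ`, one has
`∫₀^∞ e^{-λt} q₂(t) dt = e^{-(α-1)√λ}/(√λ (√λ - z))` for every `λ > 0`. -/
theorem laplace_transform_q_two (α : ℝ) (hα : 1 < α) (z : ℂ) (hz : z.re < 0)
    (l : ℝ) (hl : 0 < l) :
    ∫ t in Set.Ioi (0 : ℝ), Complex.exp (-(l * t : ℝ)) *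
        (((1 / Real.sqrt (Real.pi * t) : ℝ) : ℂ) *
          ∫ ξ in Set.Ioi (α - 1),
            Complex.exp (-(ξ : ℂ) ^ 2 / (4 * (t : ℂ)) + z * ((ξ : ℂ) - ((α : ℂ) - 1)))) =
      Complex.exp (-((α : ℂ) - 1) * (Real.sqrt l : ℂ)) /
        ((Real.sqrt l : ℂ) * ((Real.sqrt l : ℂ) - z)) := by
  set a : ℝ := α - 1 with ha
  have ha0 : 0 < a := by simp [ha]; linarith
  set K : ℝ → ℝ → ℝ := fun t ξ =>
    Real.exp (-(l*t)) * (1/Real.sqrt (π*t)) * Real.exp (-(ξ^2/(4*t))) with hK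
  set F : ℝ → ℝ → ℂ := fun t ξ => ((K t ξ : ℝ) : ℂ) * Complex.exp (z * ((ξ:ℂ) - (a:ℂ))) with hF
  -- Step 1: rewrite integrand
  have step1 : ∀ t ∈ Ioi (0:ℝ),
      Complex.exp (-(l * t : ℝ)) * (((1 / Real.sqrt (Real.pi * t) : ℝ) : ℂ) *
        ∫ ξ in Ioi (α - 1),
          Complex.exp (-(ξ : ℂ) ^ 2 / (4 * (t : ℂ)) + z * ((ξ : ℂ) - ((α : ℂ) - 1)))) =
      ∫ ξ in Ioi a, F t ξ := by
    intro t ht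
    rw [← integral_const_mul, ← integral_const_mul]
    apply setIntegral_congr_fun measurableSet_Ioi
    intro ξ hξ
    have hsplit : -(ξ : ℂ) ^ 2 / (4 * (t : ℂ)) + z * ((ξ : ℂ) - ((α : ℂ) - 1))
        = ((-(ξ^2/(4*t)) : ℝ) : ℂ) + z * ((ξ:ℂ) - (a:ℂ)) := by
      push_cast [ha]; ring
    simp only [hF, hK]
    rw [hsplit, Complex.exp_add]
    rw [show -((l*t:ℝ):ℂ) = ((-(l*t):ℝ):ℂ) by push_cast; ring, ← Complex.ofReal_exp,
      ← Complex.ofReal_exp]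
    push_cast
    ring
  rw [setIntegral_congr_fun measurableSet_Ioi step1]
  -- Step 2: Fubini
  have hKmeas : Measurable (fun p : ℝ × ℝ => K p.1 p.2) := by
    simp only [hK]
    have m1 : Measurable (fun p : ℝ × ℝ => Real.exp (-(l*p.1))) :=
      Real.measurable_exp.comp ((measurable_const.mul measurable_fst).neg)
    have m2 : Measurable (fun p : ℝ × ℝ => 1/Real.sqrt (π*p.1)) :=
      measurable_const.div (Real.continuous_sqrt.measurable.comp
        (measurable_const.mul measurable_fst))
    have m3 : Measurable (fun p : ℝ × ℝ => Real.exp (-(p.2^2/(4*p.1)))) :=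
      Real.measurable_exp.comp (((measurable_snd.pow_const 2).div
        (measurable_const.mul measurable_fst)).neg)
    exact (m1.mul m2).mul m3
  have hEcont : Continuous (fun p : ℝ × ℝ => Complex.exp (z * ((p.2:ℂ) - ((a:ℝ):ℂ)))) :=
    Complex.continuous_exp.comp (continuous_const.mul
      ((Complex.continuous_ofReal.comp continuous_snd).sub continuous_const))
  have hFmeas : AEStronglyMeasurable (Function.uncurry F)
      ((volume.restrict (Ioi (0:ℝ))).prod (volume.restrict (Ioi a))) := by
    apply Measurable.aestronglyMeasurable
    exact (Complex.measurable_ofReal.comp hKmeas).mul hEcont.measurable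
  have hnorm : ∀ t ∈ Ioi (0:ℝ), ∀ ξ : ℝ, ‖F t ξ‖ = K t ξ * Real.exp (z.re * (ξ - a)) := by
    intro t ht ξ
    simp only [hF]
    rw [norm_mul, Complex.norm_real, Real.norm_eq_abs, Complex.norm_exp]
    have hKnn : 0 ≤ K t ξ := by simp only [hK]; positivity
    rw [abs_of_nonneg hKnn]
    congr 2
    simp [Complex.mul_re]
  have hbound : ∀ t ∈ Ioi (0:ℝ), ∀ ξ : ℝ, ‖F t ξ‖ ≤
      (Real.exp (-(l*t)) * (1/Real.sqrt (π*t)) * Real.exp (-(z.re*a))) * Real.exp (z.re * ξ) := by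
    intro t ht ξ
    have ht' : (0:ℝ) < t := ht
    rw [hnorm t ht ξ]
    have h1 : K t ξ ≤ Real.exp (-(l*t)) * (1/Real.sqrt (π*t)) := by
      simp only [hK]
      have hle1 : Real.exp (-(ξ^2/(4*t))) ≤ 1 :=
        Real.exp_le_one_iff.mpr (neg_nonpos.mpr (by positivity))
      exact mul_le_of_le_one_right (by positivity) hle1
    have h2 : Real.exp (z.re*(ξ-a)) = Real.exp (-(z.re*a)) * Real.exp (z.re*ξ) := by
      rw [← Real.exp_add]; ring_nf
    calc K t ξ * Real.exp (z.re*(ξ-a))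
        ≤ (Real.exp (-(l*t)) * (1/Real.sqrt (π*t))) * Real.exp (z.re*(ξ-a)) :=
          mul_le_mul_of_nonneg_right h1 (Real.exp_nonneg _)
      _ = (Real.exp (-(l*t)) * (1/Real.sqrt (π*t)) * Real.exp (-(z.re*a)))
            * Real.exp (z.re * ξ) := by rw [h2]; ring
  have hint : Integrable (Function.uncurry F)
      ((volume.restrict (Ioi (0:ℝ))).prod (volume.restrict (Ioi a))) := by
    rw [integrable_prod_iff hFmeas]
    constructor
    · filter_upwards [ae_restrict_mem measurableSet_Ioi] with t ht
      have ht' : (0:ℝ) < t := ht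
      apply Integrable.mono' ((my_rexp_Ioi_integrable hz a).const_mul
        (Real.exp (-(l*t)) * (1/Real.sqrt (π*t)) * Real.exp (-(z.re*a))))
      · apply Measurable.aestronglyMeasurable
        have hKm : Measurable (K t) := by
          simp only [hK]
          exact measurable_const.mul
            (Real.measurable_exp.comp (((measurable_id.pow_const 2).div_const (4*t)).neg))
        exact (Complex.measurable_ofReal.comp hKm).mul
          (hEcont.measurable.comp (measurable_const.prodMk measurable_id))
      · filter_upwards with ξ
        exact hbound t ht ξ
    · apply Integrable.mono' (((my_aux_int hl).mul_const
        (Real.exp (-(z.re*a)) * (-Real.exp (z.re*a)/z.re))))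
      · exact hFmeas.norm.integral_prod_right'
      · filter_upwards [ae_restrict_mem measurableSet_Ioi] with t ht
        have ht' : (0:ℝ) < t := ht
        have hints : Integrable (fun ξ => (Real.exp (-(l*t)) * (1/Real.sqrt (π*t))
            * Real.exp (-(z.re*a))) * Real.exp (z.re * ξ)) (volume.restrict (Ioi a)) :=
          (my_rexp_Ioi_integrable hz a).const_mul _
        rw [Real.norm_eq_abs, abs_of_nonneg (integral_nonneg (fun ξ => norm_nonneg _))]
        calc ∫ ξ in Ioi a, ‖F t ξ‖
            ≤ ∫ ξ in Ioi a, (Real.exp (-(l*t)) * (1/Real.sqrt (π*t))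
                * Real.exp (-(z.re*a))) * Real.exp (z.re * ξ) := by
              apply integral_mono_of_nonneg
              · filter_upwards with ξ; exact norm_nonneg _
              · exact hints
              · filter_upwards with ξ; exact hbound t ht ξ
          _ = (Real.exp (-(l*t)) * (1/Real.sqrt (π*t)) * Real.exp (-(z.re*a)))
                * (-Real.exp (z.re*a)/z.re) := by
              rw [integral_const_mul, my_rexp_Ioi_integral hz a]
          _ = Real.exp (-(l*t)) * (1/Real.sqrt (π*t))
                * (Real.exp (-(z.re*a)) * (-Real.exp (z.re*a)/z.re)) := by ring
  have swap : ∫ t in Ioi (0:ℝ), ∫ ξ in Ioi a, F t ξ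
      = ∫ ξ in Ioi a, ∫ t in Ioi (0:ℝ), F t ξ := integral_integral_swap hint
  rw [swap]
  -- Step 3: inner integral via heat kernel Laplace transform
  have step3 : ∀ ξ ∈ Ioi a, ∫ t in Ioi (0:ℝ), F t ξ
      = ((Real.exp (-(ξ * Real.sqrt l)) / Real.sqrt l : ℝ) : ℂ)
          * Complex.exp (z * ((ξ:ℂ) - (a:ℂ))) := by
    intro ξ hξ
    have hξ0 : 0 ≤ ξ := le_of_lt (lt_trans ha0 hξ)
    simp only [hF]
    rw [integral_mul_const]
    congr 1
    have hco : ∫ t in Ioi (0:ℝ), ((K t ξ : ℝ) : ℂ)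
        = ((∫ t in Ioi (0:ℝ), K t ξ : ℝ) : ℂ) := integral_ofReal
    rw [hco]
    norm_cast
    simp only [hK]
    exact my_heat_LT hl hξ0
  rw [setIntegral_congr_fun measurableSet_Ioi step3]
  -- Step 4: final exponential integral
  have hw : (z - (Real.sqrt l : ℂ)).re < 0 := by
    have : (0:ℝ) ≤ Real.sqrt l := Real.sqrt_nonneg l
    simp [Complex.sub_re]; linarith
  have hsl : (Real.sqrt l : ℂ) ≠ 0 := by
    exact_mod_cast (Real.sqrt_pos.mpr hl).ne'
  have step4 : ∀ ξ ∈ Ioi a,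
      ((Real.exp (-(ξ * Real.sqrt l)) / Real.sqrt l : ℝ) : ℂ)
          * Complex.exp (z * ((ξ:ℂ) - (a:ℂ)))
      = ((Real.sqrt l : ℂ))⁻¹ * Complex.exp (-(z * (a:ℂ)))
          * Complex.exp ((z - (Real.sqrt l : ℂ)) * (ξ:ℂ)) := by
    intro ξ hξ
    have hmul : Complex.exp ((-(ξ*Real.sqrt l):ℝ):ℂ) * Complex.exp (z*((ξ:ℂ)-((a:ℝ):ℂ)))
        = Complex.exp (-(z*((a:ℝ):ℂ))) * Complex.exp ((z-((Real.sqrt l:ℝ):ℂ))*(ξ:ℂ)) := by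
      rw [← Complex.exp_add, ← Complex.exp_add]
      congr 1
      push_cast
      ring
    rw [Complex.ofReal_div, Complex.ofReal_exp, div_mul_eq_mul_div, div_eq_mul_inv,
      mul_comm (_ * _) _, ← mul_assoc]
    rw [show ((-(ξ * Real.sqrt l):ℝ):ℂ) = ↑(-(ξ * Real.sqrt l)) from rfl] at hmul
    rw [mul_comm ((↑(Real.sqrt l):ℂ))⁻¹ _, mul_assoc, mul_comm ((↑(Real.sqrt l):ℂ))⁻¹ _,
      ← mul_assoc, hmul]
    ring
  rw [setIntegral_congr_fun measurableSet_Ioi step4]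
  rw [integral_const_mul, my_cexp_Ioi_integral hw a]
  have hzw : z - (Real.sqrt l : ℂ) ≠ 0 := fun h => by simp [h] at hw
  have hca : ((α:ℂ) - 1) = ((a:ℝ) : ℂ) := by push_cast [ha]; ring
  rw [hca]
  have key : Complex.exp (-(z*((a:ℝ):ℂ))) * Complex.exp ((z-(Real.sqrt l:ℂ))*((a:ℝ):ℂ))
      = Complex.exp (-((a:ℝ):ℂ)*(Real.sqrt l:ℂ)) := by
    rw [← Complex.exp_add]; congr 1; ring
  have hneg : -Complex.exp ((z-(Real.sqrt l:ℂ))*((a:ℝ):ℂ))/(z-(Real.sqrt l:ℂ))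
      = Complex.exp ((z-(Real.sqrt l:ℂ))*((a:ℝ):ℂ))/((Real.sqrt l:ℂ)-z) := by
    rw [neg_div, ← div_neg, neg_sub]
  rw [hneg, div_eq_mul_inv, div_eq_mul_inv, mul_inv, ← key]
  ring
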